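/- Assume there exist u and i ∈ [N] such that p_u^i ≠ u^i/m, and that X_0^i > 0 for all i ∈ [N]. If the process {x_n} converges almost surely and its limit lies in the zero set Z_P almost surely, then the process {a_n} converges almost surely, its limit lies in Z_P almost surely, and lim_{n→∞} a_n = lim_{n→∞} x_n almost surely. -/

import Mathlib

open MeasureTheory ProbabilityTheory Filter Set

noncomputable section

/-- The vector field `P(y)^i = (1/2) ∑_u (m choose u) y^u (p_u^i − u^i/m)`, where the sum
ranges over all `u : Fin N → ℕ` with `∑ i, u i = m`. -/
def vecFieldP (N m : ℕ) (p : (Fin N → ℕ) → Fin N → ℝ) (y : Fin N → ℝ) : Fin N → ℝ :=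
  fun i => (1 / 2) * ∑ u ∈ Finset.Nat.antidiagonalTuple N m,
    (Nat.multinomial Finset.univ u : ℝ) * (∏ j, y j ^ u j) * (p u i - (u i : ℝ) / m)

/-- The zero set `Z_P = {y ∈ Δ^N : P(y) = 0}` of the vector field on the probability
simplex. -/
def zeroSetVecP (N m : ℕ) (p : (Fin N → ℕ) → Fin N → ℝ) : Set (Fin N → ℝ) :=
  {y ∈ stdSimplex ℝ (Fin N) | vecFieldP N m p y = 0}

/-- The `N`-type preferential attachment process with `m` edges per new node and type
adoption parameters `p u i` (for `u : Fin N → ℕ` with `∑ i, u i = m`), defined on a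
probability space `(Ω, μ)` with filtration `F`.  `A n i` is the number of type-`i` nodes and
`X n i` the sum of the degrees of type-`i` nodes at time `n`; the transition given `F n` is:
a vector `u` is drawn from the `Multinomial(m, x_n)` distribution, an index `i` is drawn from
the distribution `p_u`, and then `A_{n+1} = A_n + δ^i`, `X_{n+1} = X_n + u + m δ^i`. -/
structure NPAProcess (Ω : Type) [MeasurableSpace Ω] where
  μ : Measure Ω
  isProb : IsProbabilityMeasure μ
  N : ℕ
  m : ℕ
  hN : 2 ≤ N
  hm : 1 ≤ m
  p : (Fin N → ℕ) → Fin N → ℝ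
  hp_nonneg : ∀ u ∈ Finset.Nat.antidiagonalTuple N m, ∀ i, 0 ≤ p u i
  hp_sum : ∀ u ∈ Finset.Nat.antidiagonalTuple N m, ∑ i, p u i = 1
  A : ℕ → Ω → Fin N → ℕ
  X : ℕ → Ω → Fin N → ℕ
  F : Filtration ℕ ‹MeasurableSpace Ω›
  A0 : Fin N → ℕ
  X0 : Fin N → ℕ
  hA0 : ∀ ω, A 0 ω = A0
  hX0 : ∀ ω, X 0 ω = X0
  adaptedA : ∀ n, Measurable[F n] (A n)
  adaptedX : ∀ n, Measurable[F n] (X n)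
  hXsum : ∀ n ω, ∑ i, X n ω i = ∑ i, X0 i + 2 * m * n
  step : ∀ n : ℕ, ∀ u ∈ Finset.Nat.antidiagonalTuple N m, ∀ i : Fin N,
    μ[Set.indicator
        {ω | (∀ j, A (n + 1) ω j = A n ω j + if j = i then 1 else 0) ∧
             (∀ j, X (n + 1) ω j = X n ω j + u j + if j = i then m else 0)}
        (fun _ => (1 : ℝ)) | F n]
      =ᵐ[μ] fun ω => (Nat.multinomial Finset.univ u : ℝ) *
        (∏ j, ((X n ω j : ℝ) / ((∑ i', X0 i' : ℕ) + 2 * m * n : ℝ)) ^ u j) * p u i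

namespace NPAProcess

variable {Ω : Type} [MeasurableSpace Ω] (P : NPAProcess Ω)

/-- Total degree `S_n = S_0 + 2mn`. -/
def S (n : ℕ) : ℕ := ∑ i, P.X0 i + 2 * P.m * n

/-- Normalized degree vector `x_n = X_n / S_n`. -/
def x (n : ℕ) (ω : Ω) : Fin P.N → ℝ := fun i => (P.X n ω i : ℝ) / (P.S n : ℝ)

/-- Normalized type-count vector `a_n = A_n / (∑ i, A_0^i + n)`. -/
def a (n : ℕ) (ω : Ω) : Fin P.N → ℝ :=
  fun i => (P.A n ω i : ℝ) / ((∑ i', P.A0 i' : ℕ) + n : ℝ)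

/-- The vector field `P` of the process. -/
def vec : (Fin P.N → ℝ) → Fin P.N → ℝ := vecFieldP P.N P.m P.p

/-- The zero set `Z_P` of the process. -/
def Zp : Set (Fin P.N → ℝ) := zeroSetVecP P.N P.m P.p

end NPAProcess

open scoped Topology NNReal ENNReal Nat


lemma lemA (N m : ℕ) (y : Fin N → ℝ) :
    ∑ u ∈ Finset.Nat.antidiagonalTuple N m, (Nat.multinomial Finset.univ u : ℝ) * ∏ j, y j ^ u j
      = (∑ j, y j) ^ m := by
  classical
  rw [← Finset.piAntidiag_univ_fin_eq_antidiagonalTuple m N,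
    Finset.sum_pow_eq_sum_piAntidiag]

lemma lemB (N m : ℕ) (hm : 1 ≤ m) (y : Fin N → ℝ) (i : Fin N) :
    ∑ u ∈ Finset.Nat.antidiagonalTuple N m,
      (Nat.multinomial Finset.univ u : ℝ) * (∏ j, y j ^ u j) * (u i : ℝ)
      = m * y i * (∑ j, y j) ^ (m - 1) := by
  classical
  have key : ∀ u ∈ (Finset.Nat.antidiagonalTuple N m).filter (fun u => u i ≠ 0),
      (Nat.multinomial Finset.univ u : ℝ) * (∏ j, y j ^ u j) * (u i : ℝ)
      = (m : ℝ) * y i *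
        ((Nat.multinomial Finset.univ (Function.update u i (u i - 1)) : ℝ) *
          ∏ j, y j ^ (Function.update u i (u i - 1)) j) := by
    intro u hu
    simp only [Finset.mem_filter, Finset.Nat.mem_antidiagonalTuple] at hu
    obtain ⟨hsum, hne⟩ := hu
    set v := Function.update u i (u i - 1) with hv
    have hui : 0 < u i := Nat.pos_of_ne_zero hne
    have hvi : v i = u i - 1 := Function.update_self ..
    have hvj : ∀ j, j ≠ i → v j = u j := fun j hj => Function.update_of_ne hj _ _
    have hprodfact : ∏ j, (u j)! = u i * ∏ j, (v j)! := by
      rw [← Finset.mul_prod_erase Finset.univ (fun j => (u j)!) (Finset.mem_univ i),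
        ← Finset.mul_prod_erase Finset.univ (fun j => (v j)!) (Finset.mem_univ i),
        ← mul_assoc]
      congr 1
      · rw [hvi, Nat.mul_factorial_pred hui.ne']
      · exact Finset.prod_congr rfl fun j hj => by rw [hvj j (Finset.mem_erase.1 hj).1]
    have hvsum : ∑ j, v j = m - 1 := by
      rw [hv, Finset.sum_update_of_mem (Finset.mem_univ i)]
      rw [Finset.sum_eq_add_sum_sdiff_singleton_of_mem (Finset.mem_univ i)] at hsum
      omega
    have h1 := Nat.multinomial_spec Finset.univ u
    have h2 := Nat.multinomial_spec Finset.univ v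
    rw [hsum] at h1
    rw [hvsum] at h2
    have hmn : u i * Nat.multinomial Finset.univ u = m * Nat.multinomial Finset.univ v := by
      have hpos : 0 < ∏ j, (v j)! := Finset.prod_pos fun j _ => Nat.factorial_pos _
      refine Nat.eq_of_mul_eq_mul_left hpos ?_
      calc (∏ j, (v j)!) * (u i * Nat.multinomial Finset.univ u)
          = (∏ j, (u j)!) * Nat.multinomial Finset.univ u := by rw [hprodfact]; ring
        _ = m ! := h1
        _ = m * (m-1)! := (Nat.mul_factorial_pred (by omega)).symm
        _ = m * ((∏ j, (v j)!) * Nat.multinomial Finset.univ v) := by rw [h2]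
        _ = (∏ j, (v j)!) * (m * Nat.multinomial Finset.univ v) := by ring
    have hprody : ∏ j, y j ^ u j = y i * ∏ j, y j ^ v j := by
      rw [← Finset.mul_prod_erase Finset.univ (fun j => y j ^ u j) (Finset.mem_univ i),
        ← Finset.mul_prod_erase Finset.univ (fun j => y j ^ v j) (Finset.mem_univ i),
        ← mul_assoc]
      congr 1
      · rw [hvi]
        have : u i = (u i - 1) + 1 := by omega
        rw [this, pow_succ']
        norm_num
      · exact Finset.prod_congr rfl fun j hj => by rw [hvj j (Finset.mem_erase.1 hj).1]
    have hR : (u i : ℝ) * (Nat.multinomial Finset.univ u : ℝ)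
        = (m : ℝ) * (Nat.multinomial Finset.univ v : ℝ) := by exact_mod_cast hmn
    rw [hprody]
    linear_combination (y i * ∏ j, y j ^ v j) * hR
  rw [← Finset.sum_filter_of_ne (s := Finset.Nat.antidiagonalTuple N m)
      (p := fun u => u i ≠ 0)
      (f := fun u => (Nat.multinomial Finset.univ u : ℝ) * (∏ j, y j ^ u j) * (u i : ℝ))
      (fun x _ hx h => hx (by simp [h]))]
  rw [Finset.sum_congr rfl key, ← Finset.mul_sum]
  congr 1
  rw [← lemA N (m-1) y]
  apply Finset.sum_nbij' (i := fun u => Function.update u i (u i - 1))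
    (j := fun v => Function.update v i (v i + 1))
  · intro u hu
    simp only [Finset.mem_filter, Finset.Nat.mem_antidiagonalTuple] at hu ⊢
    obtain ⟨hsum, hne⟩ := hu
    rw [Finset.sum_update_of_mem (Finset.mem_univ i)]
    rw [Finset.sum_eq_add_sum_sdiff_singleton_of_mem (Finset.mem_univ i)] at hsum
    omega
  · intro v hv
    simp only [Finset.mem_filter, Finset.Nat.mem_antidiagonalTuple] at hv ⊢
    rw [Finset.sum_eq_add_sum_sdiff_singleton_of_mem (Finset.mem_univ i)] at hv
    constructor
    · rw [Finset.sum_update_of_mem (Finset.mem_univ i)]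
      omega
    · simp
  · intro u hu
    simp only [Finset.mem_filter] at hu
    funext j
    rcases eq_or_ne j i with rfl | hj
    · simp only [Function.update_self]
      have : u j ≠ 0 := hu.2
      omega
    · simp [Function.update_of_ne hj]
  · intro v _
    funext j
    rcases eq_or_ne j i with rfl | hj
    · simp only [Function.update_self]
      omega
    · simp [Function.update_of_ne hj]
  · intro u _
    rfl


lemma kronecker (b : ℕ → ℝ) (T : ℝ)
    (h : Tendsto (fun n : ℕ => ∑ k ∈ Finset.range n, ((k : ℝ) + 1)⁻¹ * b k) atTop (𝓝 T)) :
    Tendsto (fun n : ℕ => ((n : ℝ))⁻¹ * ∑ k ∈ Finset.range n, b k) atTop (𝓝 0) := by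
  set Tn : ℕ → ℝ := fun n => ∑ k ∈ Finset.range n, ((k : ℝ) + 1)⁻¹ * b k with hTn
  have hid : ∀ n : ℕ, ∑ k ∈ Finset.range n, b k
      = n * Tn n - ∑ k ∈ Finset.range n, Tn k := by
    intro n
    induction n with
    | zero => simp [Tn]
    | succ n ih =>
      rw [Finset.sum_range_succ, ih, Finset.sum_range_succ (f := Tn)]
      have hstep : Tn (n + 1) = Tn n + ((n : ℝ) + 1)⁻¹ * b n := Finset.sum_range_succ _ _
      rw [hstep]
      push_cast
      have h0 : ((n : ℝ) + 1) ≠ 0 := by positivity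
      field_simp
      ring
  have hces : Tendsto (fun n : ℕ => ((n : ℝ))⁻¹ * ∑ k ∈ Finset.range n, Tn k) atTop (𝓝 T) :=
    h.cesaro
  have hsub : Tendsto (fun n : ℕ => Tn n - (n : ℝ)⁻¹ * ∑ k ∈ Finset.range n, Tn k) atTop
      (𝓝 (T - T)) := h.sub hces
  rw [sub_self] at hsub
  apply hsub.congr'
  filter_upwards [Ici_mem_atTop 1] with n hn
  have hn0 : (n : ℝ) ≠ 0 := by
    have : (1 : ℕ) ≤ n := hn
    have : (1 : ℝ) ≤ (n : ℝ) := by exact_mod_cast this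
    linarith
  rw [hid n]
  field_simp

lemma slln_martingale {Ω : Type} [m0 : MeasurableSpace Ω] (μ : Measure Ω)
    [IsProbabilityMeasure μ] (F : Filtration ℕ m0) (d : ℕ → Ω → ℝ)
    (hadp : ∀ n, StronglyMeasurable[F (n + 1)] (d n))
    (hbdd : ∀ n ω, |d n ω| ≤ 1)
    (hcond : ∀ n, μ[d n | F n] =ᵐ[μ] 0) :
    ∀ᵐ ω ∂μ, Tendsto (fun n : ℕ => ((n : ℝ))⁻¹ * ∑ k ∈ Finset.range n, d k ω) atTop (𝓝 0) := by
  classical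
  have bddInt : ∀ (f : Ω → ℝ) (C : ℝ), StronglyMeasurable f → (∀ ω, |f ω| ≤ C) →
      Integrable f μ := fun f C hf h =>
    (integrable_const C).mono' hf.aestronglyMeasurable
      (ae_of_all _ fun ω => by simpa [Real.norm_eq_abs] using h ω)
  set e : ℕ → Ω → ℝ := fun n ω => ((n : ℝ) + 1)⁻¹ * d n ω with he
  set M : ℕ → Ω → ℝ := fun n ω => ∑ k ∈ Finset.range n, e k ω with hM
  have hebdd : ∀ n ω, |e n ω| ≤ ((n : ℝ) + 1)⁻¹ := by
    intro n ω
    rw [he]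
    simp only
    rw [abs_mul, abs_of_pos (show (0:ℝ) < ((n:ℝ)+1)⁻¹ by positivity)]
    calc ((n : ℝ) + 1)⁻¹ * |d n ω| ≤ ((n : ℝ) + 1)⁻¹ * 1 := by
          apply mul_le_mul_of_nonneg_left (hbdd n ω) (by positivity)
      _ = ((n : ℝ) + 1)⁻¹ := mul_one _
  have hebdd1 : ∀ n ω, |e n ω| ≤ 1 := by
    intro n ω
    refine (hebdd n ω).trans ?_
    rw [inv_le_one_iff₀]
    right
    have : (0:ℝ) ≤ (n:ℝ) := Nat.cast_nonneg n
    linarith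
  have hesm : ∀ n, StronglyMeasurable[F (n + 1)] (e n) := fun n => (hadp n).const_mul _
  have hmeas : ∀ n, StronglyMeasurable[F n] (M n) := by
    intro n
    apply Finset.stronglyMeasurable_fun_sum
    intro k hk
    exact (hesm k).mono (F.mono (Finset.mem_range.1 hk))
  have hsmM : ∀ n, StronglyMeasurable (M n) := fun n => (hmeas n).mono (F.le n)
  have hsme : ∀ n, StronglyMeasurable (e n) := fun n => (hesm n).mono (F.le (n + 1))
  have hMbdd : ∀ n ω, |M n ω| ≤ n := by
    intro n ω
    calc |M n ω| ≤ ∑ k ∈ Finset.range n, |e k ω| := Finset.abs_sum_le_sum_abs _ _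
      _ ≤ ∑ _k ∈ Finset.range n, (1:ℝ) := Finset.sum_le_sum fun k _ => hebdd1 k ω
      _ = n := by simp
  have hint : ∀ n, Integrable (M n) μ := fun n => bddInt _ _ (hsmM n) (hMbdd n)
  have heint : ∀ n, Integrable (e n) μ := fun n => bddInt _ _ (hsme n) (hebdd1 n)
  have hMrec : ∀ n, M (n + 1) = M n + e n := by
    intro n; funext ω; simp [hM, Finset.sum_range_succ]
  have hezero : ∀ n, μ[e n | F n] =ᵐ[μ] 0 := by
    intro n
    refine (condExp_smul ((n : ℝ) + 1)⁻¹ (d n) (F n)).trans ?_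
    filter_upwards [hcond n] with ω hω
    simp only [Pi.smul_apply, hω, Pi.zero_apply, smul_eq_mul, mul_zero]
  have hmart : Martingale M F μ := by
    apply martingale_nat (fun n => hmeas n) hint
    intro n
    rw [hMrec n]
    refine EventuallyEq.symm ((condExp_add (hint n) (heint n) (F n)).trans ?_)
    have h2 : μ[M n | F n] = M n :=
      condExp_of_stronglyMeasurable (F.le n) (hmeas n) (hint n)
    filter_upwards [hezero n] with ω h3ω
    simp only [Pi.add_apply, h2, h3ω, Pi.zero_apply, add_zero]
  have hintM2 : ∀ n, Integrable (fun ω => (M n ω) ^ 2) μ := by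
    intro n
    refine bddInt _ ((n:ℝ)^2) ((hsmM n).pow 2) fun ω => ?_
    rw [abs_pow]
    exact pow_le_pow_left₀ (abs_nonneg _) (hMbdd n ω) 2
  have hM2 : ∀ n, ∫ ω, (M n ω) ^ 2 ∂μ ≤ ∑ k ∈ Finset.range n, (((k : ℝ) + 1)⁻¹) ^ 2 := by
    intro n
    induction n with
    | zero => simp [hM]
    | succ n ih =>
      have hintMd : Integrable (fun ω => M n ω * e n ω) μ := by
        refine bddInt _ ((n:ℝ) * 1) ((hsmM n).mul (hsme n)) fun ω => ?_
        rw [abs_mul]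
        exact mul_le_mul (hMbdd n ω) (hebdd1 n ω) (abs_nonneg _) (Nat.cast_nonneg n)
      have hinte2 : Integrable (fun ω => (e n ω) ^ 2) μ := by
        refine bddInt _ 1 ((hsme n).pow 2) fun ω => ?_
        rw [abs_pow]
        calc |e n ω| ^ 2 ≤ 1 ^ 2 := pow_le_pow_left₀ (abs_nonneg _) (hebdd1 n ω) 2
          _ = 1 := one_pow 2
      have hcross : ∫ ω, M n ω * e n ω ∂μ = 0 := by
        have hpull : μ[M n * e n | F n] =ᵐ[μ] M n * μ[e n | F n] :=
          condExp_mul_of_stronglyMeasurable_left (hmeas n)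
            (hintMd.congr (ae_of_all _ fun ω => rfl)) (heint n)
        have h0 : μ[M n * e n | F n] =ᵐ[μ] 0 := by
          filter_upwards [hpull, hezero n] with ω h1ω h2ω
          simp only [Pi.mul_apply] at h1ω ⊢
          rw [h1ω, h2ω]
          simp
        calc ∫ ω, M n ω * e n ω ∂μ = ∫ ω, (M n * e n) ω ∂μ := rfl
          _ = ∫ ω, (μ[M n * e n | F n]) ω ∂μ := (integral_condExp (F.le n)).symm
          _ = ∫ ω, (0 : Ω → ℝ) ω ∂μ := integral_congr_ae h0
          _ = 0 := by simp
      have hexp : ∫ ω, (M (n+1) ω) ^ 2 ∂μ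
          = ∫ ω, (M n ω) ^ 2 ∂μ + 2 * ∫ ω, M n ω * e n ω ∂μ + ∫ ω, (e n ω) ^ 2 ∂μ := by
        have hptw : (fun ω => (M (n+1) ω) ^ 2)
            = fun ω => ((M n ω) ^ 2 + 2 * (M n ω * e n ω)) + (e n ω) ^ 2 := by
          funext ω
          rw [hMrec n]
          simp only [Pi.add_apply]
          ring
        have hfg2 : Integrable (fun ω => 2 * (M n ω * e n ω)) μ := hintMd.const_mul 2
        have hfg : Integrable (fun ω => M n ω ^ 2 + 2 * (M n ω * e n ω)) μ :=
          (hintM2 n).add hfg2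
        rw [hptw, integral_add hfg hinte2, integral_add (hintM2 n) hfg2, integral_const_mul]
      rw [Finset.sum_range_succ, hexp, hcross]
      have hd2 : ∫ ω, (e n ω) ^ 2 ∂μ ≤ (((n : ℝ) + 1)⁻¹) ^ 2 := by
        calc ∫ ω, (e n ω) ^ 2 ∂μ ≤ ∫ _ω, (((n : ℝ) + 1)⁻¹) ^ 2 ∂μ := by
              apply integral_mono hinte2 (integrable_const _)
              intro ω
              calc (e n ω) ^ 2 = |e n ω| ^ 2 := (sq_abs _).symm
                _ ≤ (((n : ℝ) + 1)⁻¹) ^ 2 := pow_le_pow_left₀ (abs_nonneg _) (hebdd n ω) 2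
          _ = (((n : ℝ) + 1)⁻¹) ^ 2 := by simp
      linarith
  have hinvsq : ∀ n : ℕ, ∑ k ∈ Finset.range n, (((k : ℝ) + 1)⁻¹) ^ 2 ≤ 2 := by
    intro n
    have key : ∀ n : ℕ, 1 ≤ n → ∑ k ∈ Finset.range n, (((k : ℝ) + 1)⁻¹) ^ 2 ≤ 2 - 1 / n := by
      intro n hn
      induction n, hn using Nat.le_induction with
      | base => norm_num
      | succ n hn ih =>
        rw [Finset.sum_range_succ]
        have hn0 : (0 : ℝ) < n := by exact_mod_cast hn
        have h1 : (((n : ℝ) + 1)⁻¹) ^ 2 ≤ 1 / n - 1 / ((n : ℝ) + 1) := by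
          rw [div_sub_div _ _ (ne_of_gt hn0) (by positivity), pow_two, ← one_div,
            div_mul_div_comm, div_le_div_iff₀ (by positivity) (by positivity)]
          nlinarith
        push_cast
        push_cast at ih h1
        linarith
    rcases Nat.eq_zero_or_pos n with rfl | hn
    · simp
    · have h2 : (0:ℝ) < 1 / n := by
        have : (0:ℝ) < n := by exact_mod_cast hn
        positivity
      linarith [key n hn]
  have hbddL1 : ∀ n, eLpNorm (M n) 1 μ ≤ ((3 : ℝ≥0) : ℝ≥0∞) := by
    intro n
    rw [eLpNorm_one_eq_lintegral_enorm]
    have hptw : ∀ ω, (‖M n ω‖₊ : ℝ≥0∞) ≤ ENNReal.ofReal (1 + (M n ω) ^ 2) := by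
      intro ω
      change ‖M n ω‖ₑ ≤ _
      rw [← ofReal_norm]
      apply ENNReal.ofReal_le_ofReal
      rw [Real.norm_eq_abs]
      nlinarith [abs_nonneg (M n ω), sq_abs (M n ω)]
    have hint1M2 : Integrable (fun ω => 1 + (M n ω) ^ 2) μ := (integrable_const 1).add (hintM2 n)
    calc ∫⁻ ω, (‖M n ω‖₊ : ℝ≥0∞) ∂μ ≤ ∫⁻ ω, ENNReal.ofReal (1 + (M n ω) ^ 2) ∂μ :=
          lintegral_mono hptw
      _ = ENNReal.ofReal (∫ ω, (1 + (M n ω) ^ 2) ∂μ) :=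
          (ofReal_integral_eq_lintegral_ofReal hint1M2
            (ae_of_all _ fun ω => by positivity)).symm
      _ ≤ ((3 : ℝ≥0) : ℝ≥0∞) := by
          rw [show ((3 : ℝ≥0) : ℝ≥0∞) = ENNReal.ofReal (3:ℝ) by
            rw [ENNReal.ofReal]; norm_num]
          apply ENNReal.ofReal_le_ofReal
          rw [integral_add (integrable_const 1) (hintM2 n)]
          simp only [integral_const, measure_univ, ENNReal.toReal_one, smul_eq_mul, one_mul, probReal_univ]
          linarith [le_trans (hM2 n) (hinvsq n)]
  have hconv := hmart.submartingale.ae_tendsto_limitProcess hbddL1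
  filter_upwards [hconv] with ω hω
  exact kronecker (fun k => d k ω) _ hω


/-- **N-type reduction from degrees to vertices.** In a nonlinear `N`-type model
(`p_u^i ≠ u^i/m` for some `u, i`) with `X_0^i > 0` for all `i`: if the process `{x_n}`
converges almost surely and its limit lies in the zero set `Z_P` almost surely, then the
process `{a_n}` converges almost surely, its limit lies in `Z_P` almost surely, and
`lim a_n = lim x_n` almost surely. -/
theorem Ntype_tendsto_a_of_tendsto_x
    {Ω : Type} [MeasurableSpace Ω] (P : NPAProcess Ω)
    (hnonlin : ∃ u ∈ Finset.Nat.antidiagonalTuple P.N P.m, ∃ i, P.p u i ≠ (u i : ℝ) / P.m)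
    (hX0 : ∀ i, 0 < P.X0 i)
    (L : Ω → (Fin P.N → ℝ))
    (hx : ∀ᵐ ω ∂P.μ, Tendsto (fun n => P.x n ω) atTop (nhds (L ω)))
    (hZ : ∀ᵐ ω ∂P.μ, L ω ∈ P.Zp) :
    (∀ᵐ ω ∂P.μ, Tendsto (fun n => P.a n ω) atTop (nhds (L ω))) ∧
    (∀ᵐ ω ∂P.μ, L ω ∈ P.Zp) := by
  classical
  haveI : IsProbabilityMeasure P.μ := P.isProb
  refine ⟨?_, hZ⟩
  set anti := Finset.Nat.antidiagonalTuple P.N P.m with hanti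
  have hNpos : 0 < P.N := by have := P.hN; omega
  -- positivity of S
  have hS0 : 0 < ∑ i', P.X0 i' :=
    Finset.sum_pos (fun i _ => hX0 i) ⟨⟨0, hNpos⟩, Finset.mem_univ _⟩
  have hSpos : ∀ n, 0 < P.S n := fun n => Nat.lt_of_lt_of_le hS0 (Nat.le_add_right _ _)
  have hSR : ∀ n, (0 : ℝ) < (P.S n : ℝ) := fun n => by exact_mod_cast hSpos n
  have hScast : ∀ n : ℕ, ((P.S n : ℕ) : ℝ)
      = ((∑ i', P.X0 i' : ℕ) : ℝ) + 2 * (P.m : ℝ) * (n : ℝ) := by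
    intro n
    rw [NPAProcess.S]
    push_cast
    ring
  -- x is in the simplex
  have hxnonneg : ∀ n ω j, 0 ≤ P.x n ω j := by
    intro n ω j
    rw [NPAProcess.x]
    positivity
  have hxsum : ∀ n ω, ∑ j, P.x n ω j = 1 := by
    intro n ω
    simp only [NPAProcess.x]
    rw [← Finset.sum_div]
    rw [div_eq_one_iff_eq (ne_of_gt (hSR n))]
    exact_mod_cast P.hXsum n ω
  -- the function g
  set g : Fin P.N → (Fin P.N → ℝ) → ℝ := fun i y =>
    ∑ u ∈ anti, (Nat.multinomial Finset.univ u : ℝ) * (∏ j, y j ^ u j) * P.p u i with hg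
  -- g at points of the simplex with vecFieldP zero
  have hgL : ∀ᵐ ω ∂P.μ, ∀ i, g i (L ω) = L ω i := by
    filter_upwards [hZ] with ω hω
    intro i
    obtain ⟨hsimplex, hzero⟩ := hω
    have h0 := congrFun hzero i
    rw [vecFieldP] at h0
    simp only [Pi.zero_apply] at h0
    have h1 : ∑ u ∈ anti, (Nat.multinomial Finset.univ u : ℝ) * (∏ j, L ω j ^ u j) *
        (P.p u i - (u i : ℝ) / P.m) = 0 := by
      have h2 : (1/2 : ℝ) ≠ 0 := by norm_num
      field_simp at h0
      rw [mul_zero] at h0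
      exact h0
    have h3 : ∑ u ∈ anti, (Nat.multinomial Finset.univ u : ℝ) * (∏ j, L ω j ^ u j) * P.p u i
        = ∑ u ∈ anti, (Nat.multinomial Finset.univ u : ℝ) * (∏ j, L ω j ^ u j) *
          ((u i : ℝ) / P.m) := by
      have := Finset.sum_sub_distrib (s := anti)
        (f := fun u => (Nat.multinomial Finset.univ u : ℝ) * (∏ j, L ω j ^ u j) * P.p u i)
        (g := fun u => (Nat.multinomial Finset.univ u : ℝ) * (∏ j, L ω j ^ u j) *
          ((u i : ℝ) / P.m))
      rw [← sub_eq_zero, ← this, ← h1]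
      apply Finset.sum_congr rfl
      intro u _
      ring
    rw [hg]
    simp only
    rw [h3]
    have h4 : ∑ u ∈ anti, (Nat.multinomial Finset.univ u : ℝ) * (∏ j, L ω j ^ u j) *
        ((u i : ℝ) / P.m)
        = (∑ u ∈ anti, (Nat.multinomial Finset.univ u : ℝ) * (∏ j, L ω j ^ u j) * (u i : ℝ))
          / P.m := by
      rw [Finset.sum_div]
      apply Finset.sum_congr rfl
      intro u _
      ring
    rw [h4, hanti, lemB P.N P.m P.hm (L ω) i]
    have hL1 : ∑ j, L ω j = 1 := hsimplex.2
    rw [hL1, one_pow, mul_one]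
    have hm0 : (P.m : ℝ) ≠ 0 := by
      have := P.hm; positivity
    field_simp
  -- events
  set E : ℕ → (Fin P.N → ℕ) → Fin P.N → Set Ω := fun n u i =>
    {ω | (∀ j, P.A (n + 1) ω j = P.A n ω j + if j = i then 1 else 0) ∧
         (∀ j, P.X (n + 1) ω j = P.X n ω j + u j + if j = i then P.m else 0)} with hE
  have hEmeas : ∀ n u i, MeasurableSet[P.F (n + 1)] (E n u i) := by
    intro n u i
    have hA1 : ∀ j, Measurable[P.F (n+1)] (fun ω => P.A (n+1) ω j) :=
      fun j => (measurable_pi_apply j).comp (P.adaptedA (n+1))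
    have hA0' : ∀ j, Measurable[P.F (n+1)] (fun ω => P.A n ω j) :=
      fun j => ((measurable_pi_apply j).comp (P.adaptedA n)).mono (P.F.mono n.le_succ) le_rfl
    have hX1 : ∀ j, Measurable[P.F (n+1)] (fun ω => P.X (n+1) ω j) :=
      fun j => (measurable_pi_apply j).comp (P.adaptedX (n+1))
    have hX0' : ∀ j, Measurable[P.F (n+1)] (fun ω => P.X n ω j) :=
      fun j => ((measurable_pi_apply j).comp (P.adaptedX n)).mono (P.F.mono n.le_succ) le_rfl
    have hEeq : E n u i =
        (⋂ j, {ω | P.A (n + 1) ω j = P.A n ω j + if j = i then 1 else 0}) ∩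
        (⋂ j, {ω | P.X (n + 1) ω j = P.X n ω j + u j + if j = i then P.m else 0}) := by
      ext ω
      simp [hE, Set.mem_iInter, Set.mem_setOf_eq]
    rw [hEeq]
    refine MeasurableSet.inter (MeasurableSet.iInter fun j => ?_)
      (MeasurableSet.iInter fun j => ?_)
    · exact measurableSet_eq_fun (hA1 j) ((hA0' j).add measurable_const)
    · exact measurableSet_eq_fun (hX1 j)
        (((hX0' j).add measurable_const).add measurable_const)
  -- uniqueness of events
  have huniq : ∀ n ω u i u' i', ω ∈ E n u i → ω ∈ E n u' i' → u = u' ∧ i = i' := by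
    intro n ω u i u' i' h1 h2
    have hii : i = i' := by
      by_contra hne
      have e1 := h1.1 i
      have e2 := h2.1 i
      rw [e1] at e2
      simp [hne] at e2
    subst hii
    refine ⟨?_, rfl⟩
    funext j
    have e1 := h1.2 j
    have e2 := h2.2 j
    rw [e1] at e2
    omega
  -- the indicator sums D
  set D : ℕ → Fin P.N → Ω → ℝ := fun n i ω =>
    ∑ u ∈ anti, (E n u i).indicator (fun _ => (1 : ℝ)) ω with hD
  have hDsm : ∀ n i, StronglyMeasurable[P.F (n + 1)] (D n i) := by
    intro n i
    exact Finset.stronglyMeasurable_fun_sum _ fun u _ =>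
      (stronglyMeasurable_const.indicator (hEmeas n u i))
  have hDnonneg : ∀ n i ω, 0 ≤ D n i ω := by
    intro n i ω
    rw [hD]
    exact Finset.sum_nonneg fun u _ => Set.indicator_nonneg (fun _ _ => zero_le_one) ω
  have hDeq : ∀ n ω u0 i0, u0 ∈ anti → ω ∈ E n u0 i0 →
      ∀ i, D n i ω = if i = i0 then 1 else 0 := by
    intro n ω u0 i0 hu0 hmem i
    rw [hD]
    simp only
    rcases eq_or_ne i i0 with rfl | hne
    · rw [Finset.sum_eq_single_of_mem u0 hu0]
      · simp [Set.indicator_of_mem hmem]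
      · intro u _ hu
        apply Set.indicator_of_notMem
        intro hmem'
        exact hu (huniq n ω u i u0 i hmem' hmem).1
    · simp only [if_neg hne]
      apply Finset.sum_eq_zero
      intro u _
      apply Set.indicator_of_notMem
      intro hmem'
      exact hne (huniq n ω u i u0 i0 hmem' hmem).2
  have hDle1 : ∀ n i ω, D n i ω ≤ 1 := by
    intro n i ω
    by_cases hex : ∃ u0 ∈ anti, ∃ i0, ω ∈ E n u0 i0
    · obtain ⟨u0, hu0, i0, hmem⟩ := hex
      rw [hDeq n ω u0 i0 hu0 hmem i]
      split <;> norm_num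
    · push_neg at hex
      rw [hD]
      simp only
      rw [Finset.sum_eq_zero]
      · norm_num
      · intro u hu
        exact Set.indicator_of_notMem (hex u hu i) _
  have hTle1 : ∀ n ω, ∑ i, D n i ω ≤ 1 := by
    intro n ω
    by_cases hex : ∃ u0 ∈ anti, ∃ i0, ω ∈ E n u0 i0
    · obtain ⟨u0, hu0, i0, hmem⟩ := hex
      rw [Finset.sum_congr rfl fun i _ => hDeq n ω u0 i0 hu0 hmem i]
      simp
    · push_neg at hex
      have : ∀ i, D n i ω = 0 := by
        intro i
        rw [hD]
        simp only
        exact Finset.sum_eq_zero fun u hu => Set.indicator_of_notMem (hex u hu i) _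
      rw [Finset.sum_congr rfl fun i _ => this i]
      simp
  -- integrability helper
  have bddInt : ∀ (f : Ω → ℝ) (C : ℝ), AEStronglyMeasurable f P.μ → (∀ ω, |f ω| ≤ C) →
      Integrable f P.μ := fun f C hf h =>
    (integrable_const C).mono' hf (ae_of_all _ fun ω => by
      simpa [Real.norm_eq_abs] using h ω)
  have hDint : ∀ n i, Integrable (D n i) P.μ := fun n i =>
    bddInt _ 1 ((hDsm n i).mono (P.F.le (n+1))).aestronglyMeasurable
      (fun ω => abs_le.2 ⟨by linarith [hDnonneg n i ω], hDle1 n i ω⟩)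
  -- conditional expectation of D
  have hgx_sm : ∀ n i, StronglyMeasurable[P.F n] (fun ω => g i (P.x n ω)) := by
    intro n i
    apply Finset.stronglyMeasurable_fun_sum
    intro u _
    apply StronglyMeasurable.mul_const
    apply StronglyMeasurable.const_mul
    apply Finset.stronglyMeasurable_fun_prod
    intro j _
    apply Measurable.stronglyMeasurable
    apply Measurable.pow_const
    apply Measurable.div_const
    exact (measurable_from_top).comp ((measurable_pi_apply j).comp (P.adaptedX n))
  have hgnonneg : ∀ n i ω, 0 ≤ g i (P.x n ω) := by
    intro n i ω
    apply Finset.sum_nonneg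
    intro u hu
    have := P.hp_nonneg u hu i
    have h1 : 0 ≤ ∏ j, P.x n ω j ^ u j :=
      Finset.prod_nonneg fun j _ => pow_nonneg (hxnonneg n ω j) _
    positivity
  have hgle1 : ∀ n i ω, g i (P.x n ω) ≤ 1 := by
    intro n i ω
    have : g i (P.x n ω) ≤ ∑ u ∈ anti, (Nat.multinomial Finset.univ u : ℝ) *
        ∏ j, P.x n ω j ^ u j := by
      apply Finset.sum_le_sum
      intro u hu
      have hp1 : P.p u i ≤ 1 := by
        rw [← P.hp_sum u hu]
        exact Finset.single_le_sum (fun j _ => P.hp_nonneg u hu j) (Finset.mem_univ i)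
      have h1 : 0 ≤ (Nat.multinomial Finset.univ u : ℝ) * ∏ j, P.x n ω j ^ u j := by
        have := Finset.prod_nonneg (fun j (_ : j ∈ Finset.univ) =>
          pow_nonneg (hxnonneg n ω j) (u j))
        positivity
      exact mul_le_of_le_one_right h1 hp1
    rw [hanti] at this
    rwa [lemA P.N P.m (P.x n ω), hxsum n ω, one_pow] at this
  have hgint : ∀ n i, Integrable (fun ω => g i (P.x n ω)) P.μ := fun n i =>
    bddInt _ 1 ((hgx_sm n i).mono (P.F.le n)).aestronglyMeasurable
      (fun ω => abs_le.2 ⟨by linarith [hgnonneg n i ω], hgle1 n i ω⟩)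
  have hDcond : ∀ n i, P.μ[D n i | P.F n] =ᵐ[P.μ] fun ω => g i (P.x n ω) := by
    intro n i
    have hDsum : D n i = ∑ u ∈ anti, (E n u i).indicator (fun _ => (1 : ℝ)) := by
      funext ω; rw [hD]; simp [Finset.sum_apply]
    have hindint : ∀ u ∈ anti, Integrable ((E n u i).indicator (fun _ => (1 : ℝ))) P.μ := by
      intro u _
      refine bddInt _ 1 ?_ ?_
      · exact (stronglyMeasurable_const.indicator
          ((hEmeas n u i))).mono (P.F.le (n+1)) |>.aestronglyMeasurable
      · intro ω
        rw [Set.indicator]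
        split <;> norm_num
    have h1 := condExp_finsetSum (m := P.F n) (μ := P.μ) hindint
    rw [hDsum]
    refine h1.trans ?_
    have h2 : ∀ᵐ ω ∂P.μ, ∀ u ∈ anti,
        (P.μ[(E n u i).indicator (fun _ => (1 : ℝ)) | P.F n]) ω
        = (Nat.multinomial Finset.univ u : ℝ) *
          (∏ j, ((P.X n ω j : ℝ) / ((∑ i', P.X0 i' : ℕ) + 2 * P.m * n : ℝ)) ^ u j) *
          P.p u i := by
      rw [Filter.eventually_all_finset]
      exact fun u hu => P.step n u hu i
    filter_upwards [h2] with ω hω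
    rw [Finset.sum_apply]
    rw [Finset.sum_congr rfl fun u hu => hω u hu]
    apply Finset.sum_congr rfl
    intro u _
    congr 2
    apply Finset.prod_congr rfl
    intro j _
    congr 1
    rw [NPAProcess.x, hScast n]
  -- almost surely, at each step exactly one event occurs
  have hGood : ∀ᵐ ω ∂P.μ, ∀ n, ∑ i, D n i ω = 1 := by
    rw [MeasureTheory.ae_all_iff]
    intro n
    set T : Ω → ℝ := fun ω => ∑ i, D n i ω with hT
    have hTsum : T = ∑ i, D n i := by funext ω; rw [hT]; simp [Finset.sum_apply]
    have hTcond : P.μ[T | P.F n] =ᵐ[P.μ] fun _ => (1 : ℝ) := by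
      rw [hTsum]
      refine (condExp_finsetSum (fun i _ => hDint n i) (P.F n)).trans ?_
      have h2 : ∀ᵐ ω ∂P.μ, ∀ i : Fin P.N,
          (P.μ[D n i | P.F n]) ω = g i (P.x n ω) := by
        rw [MeasureTheory.ae_all_iff]
        exact fun i => hDcond n i
      filter_upwards [h2] with ω hω
      rw [Finset.sum_apply]
      rw [Finset.sum_congr rfl fun i _ => hω i]
      have hswap : ∑ i, g i (P.x n ω)
          = ∑ u ∈ anti, (Nat.multinomial Finset.univ u : ℝ) *
            (∏ j, P.x n ω j ^ u j) * (∑ i, P.p u i) := by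
        rw [hg]
        simp only
        rw [Finset.sum_comm]
        apply Finset.sum_congr rfl
        intro u _
        rw [Finset.mul_sum]
      rw [hswap]
      rw [Finset.sum_congr rfl fun u hu => by rw [P.hp_sum u hu, mul_one]]
      rw [hanti, lemA P.N P.m (P.x n ω), hxsum n ω, one_pow]
    have hTint : Integrable T P.μ :=
      integrable_finset_sum _ fun i _ => hDint n i
    have hint1 : ∫ ω, T ω ∂P.μ = 1 := by
      rw [← integral_condExp (P.F.le n) (f := T)]
      rw [integral_congr_ae hTcond]
      simp
    have hone : Integrable (fun ω => 1 - T ω) P.μ := (integrable_const 1).sub hTint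
    have hzero : ∫ ω, (1 - T ω) ∂P.μ = 0 := by
      rw [integral_sub (integrable_const 1) hTint, hint1]
      simp
    have h5 : (fun ω => 1 - T ω) =ᵐ[P.μ] 0 := by
      rw [← integral_eq_zero_iff_of_nonneg (fun ω => by
        have := hTle1 n ω
        simp only [Pi.zero_apply]
        rw [hT]
        simp only
        linarith) hone]
      exact hzero
    filter_upwards [h5] with ω hω
    simp only [Pi.zero_apply] at hω
    rw [hT] at hω
    simp only at hω
    linarith
  -- pathwise identity for A
  have hAeq : ∀ᵐ ω ∂P.μ, ∀ n i, (P.A n ω i : ℝ) = P.A0 i + ∑ k ∈ Finset.range n, D k i ω := by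
    filter_upwards [hGood] with ω hω
    have hstep : ∀ n i, (P.A (n+1) ω i : ℝ) = (P.A n ω i : ℝ) + D n i ω := by
      intro n i
      have h1 : ∃ i0, D n i0 ω ≠ 0 := by
        by_contra hcon
        push_neg at hcon
        have := hω n
        rw [Finset.sum_congr rfl fun i _ => hcon i] at this
        simp at this
      obtain ⟨i0, hi0⟩ := h1
      have h2 : ∃ u0 ∈ anti, (E n u0 i0).indicator (fun _ => (1:ℝ)) ω ≠ 0 := by
        by_contra hcon
        push_neg at hcon
        apply hi0
        rw [hD]
        simp only
        exact Finset.sum_eq_zero fun u hu => hcon u hu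
      obtain ⟨u0, hu0, hind⟩ := h2
      have hmem : ω ∈ E n u0 i0 := by
        by_contra hcon
        exact hind (Set.indicator_of_notMem hcon _)
      rw [hDeq n ω u0 i0 hu0 hmem i]
      have := hmem.1 i
      rw [this]
      push_cast
      split <;> norm_num
    intro n i
    induction n with
    | zero => simp [P.hA0 ω]
    | succ n ih => rw [Finset.sum_range_succ, hstep n i, ih]; ring
  -- the strong law for each coordinate
  have hslln : ∀ᵐ ω ∂P.μ, ∀ i : Fin P.N, Tendsto (fun n : ℕ =>
      ((n : ℝ))⁻¹ * ∑ k ∈ Finset.range n, (D k i ω - g i (P.x k ω))) atTop (𝓝 0) := by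
    rw [MeasureTheory.ae_all_iff]
    intro i
    apply slln_martingale P.μ P.F (fun n ω => D n i ω - g i (P.x n ω))
    · intro n
      exact (hDsm n i).sub ((hgx_sm n i).mono (P.F.mono n.le_succ))
    · intro n ω
      have h1 := hDnonneg n i ω
      have h2 := hDle1 n i ω
      have h3 := hgnonneg n i ω
      have h4 := hgle1 n i ω
      rw [abs_le]
      constructor <;> linarith
    · intro n
      have hsub : (fun ω => D n i ω - g i (P.x n ω)) = D n i - fun ω => g i (P.x n ω) := rfl
      rw [hsub]
      refine (condExp_sub (hDint n i) (hgint n i) (P.F n)).trans ?_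
      have h6 : P.μ[fun ω => g i (P.x n ω) | P.F n] = fun ω => g i (P.x n ω) :=
        condExp_of_stronglyMeasurable (P.F.le n) (hgx_sm n i) (hgint n i)
      filter_upwards [hDcond n i] with ω hω
      simp only [Pi.sub_apply, hω, h6, Pi.zero_apply, sub_self]
  -- ratio limit
  set c : ℕ := ∑ i', P.A0 i' with hc
  have hratio : Tendsto (fun n : ℕ => (n : ℝ) / ((c : ℝ) + n)) atTop (𝓝 1) := by
    have h1 : Tendsto (fun n : ℕ => (c : ℝ) / n + 1) atTop (𝓝 (0 + 1)) :=
      (tendsto_const_div_atTop_nhds_zero_nat (c : ℝ)).add tendsto_const_nhds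
    rw [zero_add] at h1
    have h2 := h1.inv₀ one_ne_zero
    rw [inv_one] at h2
    apply h2.congr'
    filter_upwards [Ici_mem_atTop 1] with n hn
    have hn0 : (0:ℝ) < n := by
      have : (1:ℕ) ≤ n := hn
      exact_mod_cast Nat.lt_of_lt_of_le Nat.zero_lt_one this
    have hcn : (0:ℝ) < (c:ℝ) + n := by positivity
    field_simp
  have hdenom : Tendsto (fun n : ℕ => ((c : ℝ) + n)) atTop atTop :=
    tendsto_atTop_add_const_left _ _ tendsto_natCast_atTop_atTop
  -- conclusion
  filter_upwards [hx, hgL, hAeq, hslln] with ω hxω hgLω hAω hsω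
  rw [tendsto_pi_nhds]
  intro i
  have hxco : ∀ j, Tendsto (fun n => P.x n ω j) atTop (𝓝 (L ω j)) :=
    fun j => (tendsto_pi_nhds.1 hxω) j
  have hgtend : Tendsto (fun k => g i (P.x k ω)) atTop (𝓝 (L ω i)) := by
    rw [← hgLω i]
    have hcont : Continuous (g i) := by
      rw [hg]
      simp only
      apply continuous_finset_sum
      intro u _
      fun_prop
    exact (hcont.tendsto (L ω)).comp hxω
  have hces : Tendsto (fun n : ℕ => ((n:ℝ))⁻¹ * ∑ k ∈ Finset.range n, g i (P.x k ω))
      atTop (𝓝 (L ω i)) := hgtend.cesaro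
  have ht1 : Tendsto (fun n : ℕ => (P.A0 i : ℝ) / ((c : ℝ) + n)) atTop (𝓝 0) :=
    Tendsto.div_atTop tendsto_const_nhds hdenom
  have ht2 : Tendsto (fun n : ℕ =>
      (((n:ℝ))⁻¹ * ∑ k ∈ Finset.range n, (D k i ω - g i (P.x k ω))) * ((n:ℝ)/((c:ℝ)+n)))
      atTop (𝓝 (0 * 1)) := (hsω i).mul hratio
  have ht3 : Tendsto (fun n : ℕ =>
      (((n:ℝ))⁻¹ * ∑ k ∈ Finset.range n, g i (P.x k ω)) * ((n:ℝ)/((c:ℝ)+n)))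
      atTop (𝓝 ((L ω i) * 1)) := hces.mul hratio
  have htot := (ht1.add ht2).add ht3
  rw [show (0 + 0 * 1 + L ω i * 1 : ℝ) = L ω i by ring] at htot
  apply htot.congr'
  filter_upwards [Ici_mem_atTop 1] with n hn
  have hn0 : (0:ℝ) < n := by
    have : (1:ℕ) ≤ n := hn
    exact_mod_cast Nat.lt_of_lt_of_le Nat.zero_lt_one this
  have hcn : (0:ℝ) < (c:ℝ) + n := by positivity
  rw [NPAProcess.a]
  rw [hAω n i, ← hc]
  have hsplit : ∑ k ∈ Finset.range n, D k i ω
      = (∑ k ∈ Finset.range n, (D k i ω - g i (P.x k ω)))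
        + ∑ k ∈ Finset.range n, g i (P.x k ω) := by
    rw [← Finset.sum_add_distrib]
    apply Finset.sum_congr rfl
    intro k _
    ring
  rw [hsplit]
  field_simp
  ring
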